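/- Let K be a convex body in S^d ⊆ ℝ^{d+1}, let H be a (d−1)-dimensional great sphere of S^d with H ∩ K = ∅, let p ∈ H, and let q be a boundary point of K with p ≠ −q. Let F be an exposed face of K containing q whose dimension is smallest among all exposed faces of K containing q. Then q is illuminated from p if and only if the conjugate face F̂ is contained in the open hemisphere H_p = {y ∈ S^d : ⟨p,y⟩ > 0}. -/

import Mathlib

open RealInnerProductSpace Metric Set

noncomputable section

/-- Euclidean `n`-space. -/
abbrev Euc (n : ℕ) := EuclideanSpace ℝ (Fin n)

/-- The unit sphere `S^d` in `ℝ^{d+1}`. -/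
def uSphere (d : ℕ) : Set (Euc (d + 1)) := Metric.sphere 0 1

/-- Radial (normalizing) projection onto the unit sphere. -/
def nproj {n : ℕ} (x : Euc n) : Euc n := ‖x‖⁻¹ • x

/-- The spherical segment (shorter great-circle arc) with endpoints `p` and `q`
(meaningful when `p ≠ -q`). -/
def sphSeg {n : ℕ} (p q : Euc n) : Set (Euc n) :=
  (fun t : ℝ => nproj ((1 - t) • p + t • q)) '' Set.Icc 0 1

/-- The relative interior of the spherical segment with endpoints `p` and `q`. -/
def sphOpenSeg {n : ℕ} (p q : Euc n) : Set (Euc n) :=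
  (fun t : ℝ => nproj ((1 - t) • p + t • q)) '' Set.Ioo 0 1

/-- The great circle through `p` and `q`. -/
def greatCircle (d : ℕ) (p q : Euc (d + 1)) : Set (Euc (d + 1)) :=
  {z ∈ uSphere d | z ∈ Submodule.span ℝ {p, q}}

/-- The open hemisphere with center `x`. -/
def openHemi (d : ℕ) (x : Euc (d + 1)) : Set (Euc (d + 1)) :=
  {y ∈ uSphere d | 0 < ⟪x, y⟫}

/-- The `(d-1)`-dimensional great sphere of `S^d` with pole `u`. -/
def greatSphere (d : ℕ) (u : Euc (d + 1)) : Set (Euc (d + 1)) :=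
  {y ∈ uSphere d | ⟪u, y⟫ = 0}

/-- A set `C ⊆ S^d` is spherically convex if it is contained in an open hemisphere
and contains the shorter arc connecting any two of its points. -/
def SphConvex (d : ℕ) (C : Set (Euc (d + 1))) : Prop :=
  C ⊆ uSphere d ∧ (∃ x ∈ uSphere d, C ⊆ openHemi d x) ∧
    ∀ p ∈ C, ∀ q ∈ C, sphSeg p q ⊆ C

/-- The interior of `K` relative to the sphere `S^d`. -/
def sphInt (d : ℕ) (K : Set (Euc (d + 1))) : Set (Euc (d + 1)) :=
  {x ∈ uSphere d | ∃ U : Set (Euc (d + 1)), IsOpen U ∧ x ∈ U ∧ U ∩ uSphere d ⊆ K}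

/-- The boundary of a closed set `K ⊆ S^d` relative to the sphere `S^d`. -/
def sphBd (d : ℕ) (K : Set (Euc (d + 1))) : Set (Euc (d + 1)) := K \ sphInt d K

/-- A convex body in `S^d`: a compact spherically convex set with nonempty interior
relative to `S^d`. -/
def IsSphBody (d : ℕ) (K : Set (Euc (d + 1))) : Prop :=
  IsCompact K ∧ SphConvex d K ∧ (sphInt d K).Nonempty

/-- The boundary point `q` of `K` is illuminated from the point `p`. -/
def SphIlluminated (d : ℕ) (K : Set (Euc (d + 1))) (p q : Euc (d + 1)) : Prop :=
  q ≠ -p ∧ sphSeg p q ∩ sphInt d K = ∅ ∧ (greatCircle d p q ∩ sphInt d K).Nonempty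

/-- The set `S` illuminates the convex body `K ⊆ S^d`. -/
def SphIlluminates (d : ℕ) (K S : Set (Euc (d + 1))) : Prop :=
  ∀ q ∈ sphBd d K, ∃ p ∈ S, SphIlluminated d K p q

/-- The illumination number of a convex body `K` in `S^d`: the smallest cardinality of
a set illuminating `K` and lying on a `(d-1)`-dimensional great sphere disjoint from `K`. -/
def sphIllumNumber (d : ℕ) (K : Set (Euc (d + 1))) : ℕ∞ :=
  sInf {n : ℕ∞ | ∃ u ∈ uSphere d, greatSphere d u ∩ K = ∅ ∧
    ∃ S : Finset (Euc (d + 1)), ↑S ⊆ greatSphere d u ∧ SphIlluminates d K ↑S ∧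
      (S.card : ℕ∞) = n}

/-- A convex body in a Euclidean space: compact, convex, with nonempty interior. -/
def IsConvexBody {n : ℕ} (K : Set (Euc n)) : Prop :=
  IsCompact K ∧ Convex ℝ K ∧ (interior K).Nonempty

/-- The boundary point `p` of `K` is illuminated from the direction `v`. -/
def IlluminatedDir {n : ℕ} (K : Set (Euc n)) (v p : Euc n) : Prop :=
  ∃ t : ℝ, 0 < t ∧ p + t • v ∈ interior K

/-- The finite set of unit vectors `D` illuminates the convex body `K`. -/
def IlluminatesDirs {n : ℕ} (D : Finset (Euc n)) (K : Set (Euc n)) : Prop :=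
  (∀ v ∈ D, ‖v‖ = 1) ∧ ∀ p ∈ frontier K, ∃ v ∈ D, IlluminatedDir K v p

/-- The illumination number of a convex body in Euclidean space. -/
def illumNumber {n : ℕ} (K : Set (Euc n)) : ℕ∞ :=
  sInf {m : ℕ∞ | ∃ D : Finset (Euc n), IlluminatesDirs D K ∧ (D.card : ℕ∞) = m}

/-- The illumination number of a convex body `K` of an affine subspace of a Euclidean
space, computed within the affine span of `K` (directions are parallel to the affine
span; interior and boundary are relative to the affine span). -/
def intIllumNumber {n : ℕ} (K : Set (Euc n)) : ℕ∞ :=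
  sInf {m : ℕ∞ | ∃ D : Finset (Euc n),
    (∀ v ∈ D, ‖v‖ = 1 ∧ v ∈ (affineSpan ℝ K).direction) ∧
    (∀ p ∈ intrinsicFrontier ℝ K, ∃ v ∈ D, ∃ t : ℝ, 0 < t ∧
      p + t • v ∈ intrinsicInterior ℝ K) ∧
    (D.card : ℕ∞) = m}

/-- A face of a convex body `K` in Euclidean space: a convex subset `F ⊆ K` such that
any segment of `K` whose relative interior meets `F` is contained in `F`. -/
def IsFace {n : ℕ} (K F : Set (Euc n)) : Prop :=
  F ⊆ K ∧ Convex ℝ F ∧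
    ∀ x ∈ K, ∀ y ∈ K, (openSegment ℝ x y ∩ F).Nonempty → segment ℝ x y ⊆ F

/-- The dimension of a subset of a Euclidean space (dimension of its affine hull). -/
def faceDim {n : ℕ} (F : Set (Euc n)) : ℕ := Module.finrank ℝ (vectorSpan ℝ F)

/-- A face of a convex body `K` in `S^d`: a spherically convex subset `F ⊆ K` such that
any spherical segment of `K` whose relative interior meets `F` is contained in `F`. -/
def IsSphFace (d : ℕ) (K F : Set (Euc (d + 1))) : Prop :=
  F ⊆ K ∧ SphConvex d F ∧
    ∀ p ∈ K, ∀ q ∈ K, (sphOpenSeg p q ∩ F).Nonempty → sphSeg p q ⊆ F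

/-- The (spherical) dimension of a subset `F` of `S^d`: one less than the dimension of
its linear hull. -/
def sphFaceDim (d : ℕ) (F : Set (Euc (d + 1))) : ℕ :=
  Module.finrank ℝ (Submodule.span ℝ F) - 1

/-- The polar body of a convex body `K ⊆ S^d`. -/
def sphPolar (d : ℕ) (K : Set (Euc (d + 1))) : Set (Euc (d + 1)) :=
  {x ∈ uSphere d | ∀ y ∈ K, ⟪x, y⟫ ≤ 0}

/-- An exposed face of a convex body `L` in `S^d`: a nonempty intersection of `L`
with a supporting great sphere. -/
def IsSphExposedFace (d : ℕ) (L F : Set (Euc (d + 1))) : Prop :=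
  F.Nonempty ∧ ∃ u ∈ uSphere d, (∀ y ∈ L, ⟪u, y⟫ ≤ 0) ∧ F = {y ∈ L | ⟪u, y⟫ = 0}

/-- The conjugate face of an exposed face `F` of a convex body `K ⊆ S^d`. -/
def conjFace (d : ℕ) (K F : Set (Euc (d + 1))) : Set (Euc (d + 1)) :=
  {x ∈ sphPolar d K | ∀ y ∈ F, ⟪x, y⟫ = 0}

/-- Two Euclidean convex bodies are combinatorially equivalent if there is a
homeomorphism between their boundaries mapping faces to faces. -/
def CombEquiv {n : ℕ} (K K' : Set (Euc n)) : Prop :=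
  ∃ h : (frontier K) ≃ₜ (frontier K'),
    ∀ X : Set (frontier K),
      IsFace K (Subtype.val '' X) ↔ IsFace K' (Subtype.val '' (h '' X))

/-- The combinatorial illumination number of a Euclidean convex body `K`: the smallest
number of directions that illuminate some convex body combinatorially equivalent to `K`. -/
def combIllumNumber {n : ℕ} (K : Set (Euc n)) : ℕ∞ :=
  sInf {m : ℕ∞ | ∃ K' : Set (Euc n), IsConvexBody K' ∧ CombEquiv K K' ∧
    ∃ D : Finset (Euc n), IlluminatesDirs D K' ∧ (D.card : ℕ∞) = m}

/-- A convex polytope in `S^d`: a convex body that is the intersection of finitely many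
closed hemispheres. -/
def IsSphPolytope (d : ℕ) (P : Set (Euc (d + 1))) : Prop :=
  IsSphBody d P ∧ ∃ s : Finset (Euc (d + 1)), (∀ u ∈ s, u ∈ uSphere d) ∧
    P = uSphere d ∩ {y | ∀ u ∈ s, ⟪u, y⟫ ≤ 0}

end

open Filter Topology

section helper
variable {d : ℕ}

lemma mem_uSphere_iff {x : Euc (d+1)} : x ∈ uSphere d ↔ ‖x‖ = 1 := by
  simp [uSphere, mem_sphere_zero_iff_norm]

lemma nproj_unit {n : ℕ} {v : Euc n} (hv : ‖v‖ = 1) : nproj v = v := by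
  simp [nproj, hv]

lemma norm_nproj {n : ℕ} {v : Euc n} (hv : v ≠ 0) : ‖nproj v‖ = 1 := by
  have h : ‖v‖ ≠ 0 := norm_ne_zero_iff.mpr hv
  simp [nproj, norm_smul, abs_of_nonneg (norm_nonneg v), inv_mul_cancel₀ h]

lemma nproj_smul {n : ℕ} (v : Euc n) {c : ℝ} (hc : 0 < c) : nproj (c • v) = nproj v := by
  rcases eq_or_ne v 0 with rfl | hv
  · simp [nproj]
  · have h : ‖v‖ ≠ 0 := norm_ne_zero_iff.mpr hv
    rw [nproj, nproj, norm_smul, Real.norm_eq_abs, abs_of_pos hc, mul_inv, smul_smul]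
    congr 1
    field_simp

lemma cone_mem_K {K : Set (Euc (d+1))} (hK : SphConvex d K)
    {a b : Euc (d+1)} (ha : a ∈ K) (hb : b ∈ K) {s t : ℝ} (hs : 0 ≤ s) (ht : 0 ≤ t)
    (hne : s • a + t • b ≠ 0) : nproj (s • a + t • b) ∈ K := by
  have hst : 0 < s + t := by
    rcases (add_nonneg hs ht).lt_or_eq with h | h
    · exact h
    · exfalso
      have hs0 : s = 0 := by linarith
      have ht0 : t = 0 := by linarith
      simp [hs0, ht0] at hne
  have key : nproj ((1 - t/(s+t)) • a + (t/(s+t)) • b) = nproj (s • a + t • b) := by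
    have h1 : (1 - t/(s+t)) • a + (t/(s+t)) • b = (s+t)⁻¹ • (s • a + t • b) := by
      rw [smul_add, smul_smul, smul_smul]
      congr 2
      · field_simp; ring
      · field_simp
    rw [h1, nproj_smul _ (inv_pos.mpr hst)]
  have hmem : nproj ((1 - t/(s+t)) • a + (t/(s+t)) • b) ∈ sphSeg a b :=
    ⟨t/(s+t), ⟨div_nonneg ht hst.le, div_le_one_of_le₀ (by linarith) hst.le⟩, rfl⟩
  rw [key] at hmem
  exact hK.2.2 a ha b hb hmem

lemma neg_not_mem {K : Set (Euc (d+1))} (hK : SphConvex d K)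
    {a : Euc (d+1)} (ha : a ∈ K) : -a ∉ K := by
  obtain ⟨c, _, hc⟩ := hK.2.1
  intro h
  have h1 := (hc ha).2
  have h2 := (hc h).2
  rw [inner_neg_right] at h2
  linarith

lemma sphInt_subset {K : Set (Euc (d+1))} {m : Euc (d+1)} (hm : m ∈ sphInt d K) : m ∈ K := by
  obtain ⟨hmS, U, _, hmU, hUK⟩ := hm
  exact hUK ⟨hmU, hmS⟩

lemma polar_inner_int_neg {K : Set (Euc (d+1))} {x m : Euc (d+1)}
    (hx1 : ‖x‖ = 1) (hxP : ∀ y ∈ K, ⟪x, y⟫ ≤ 0) (hm : m ∈ sphInt d K) : ⟪x, m⟫ < 0 := by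
  obtain ⟨hmS, U, hU, hmU, hUK⟩ := hm
  have hm1 : ‖m‖ = 1 := mem_uSphere_iff.mp hmS
  have hle : ⟪x, m⟫ ≤ 0 := hxP m (hUK ⟨hmU, hmS⟩)
  rcases hle.lt_or_eq with h | h0
  · exact h
  exfalso
  -- perturb m towards x
  set v : ℕ → Euc (d+1) := fun n => m + (1/((n:ℝ)+1)) • x with hv
  have hinner : ∀ n : ℕ, ⟪x, v n⟫ = 1/((n:ℝ)+1) := by
    intro n
    rw [hv]
    simp only [inner_add_right, real_inner_smul_right, real_inner_self_eq_norm_sq, hx1, h0]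
    norm_num
  have hvne : ∀ n, v n ≠ 0 := by
    intro n h
    have h2 := hinner n
    rw [h, inner_zero_right] at h2
    have h3 : (0:ℝ) < 1/((n:ℝ)+1) := by positivity
    rw [← h2] at h3
    exact lt_irrefl 0 h3
  have htend : Tendsto v atTop (𝓝 m) := by
    have h1 : Tendsto (fun n : ℕ => (1/((n:ℝ)+1)) • x) atTop (𝓝 ((0:ℝ) • x)) :=
      tendsto_one_div_add_atTop_nhds_zero_nat.smul_const x
    rw [zero_smul] at h1
    have h2 := (tendsto_const_nhds : Tendsto (fun _ : ℕ => m) atTop (𝓝 m)).add h1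
    rw [add_zero] at h2
    exact h2
  have hcont : ContinuousAt (fun w : Euc (d+1) => nproj w) m := by
    have : ‖m‖ ≠ 0 := by rw [hm1]; norm_num
    exact (continuousAt_id.norm.inv₀ this).smul continuousAt_id
  have htend2 : Tendsto (fun n => nproj (v n)) atTop (𝓝 m) := by
    have := hcont.tendsto.comp htend
    rwa [nproj_unit hm1] at this
  have hev : ∀ᶠ n in atTop, nproj (v n) ∈ U := htend2.eventually (hU.eventually_mem hmU)
  obtain ⟨n, hn⟩ := hev.exists
  have hKn : nproj (v n) ∈ K := hUK ⟨hn, mem_uSphere_iff.mpr (norm_nproj (hvne n))⟩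
  have hpos : 0 < ⟪x, nproj (v n)⟫ := by
    rw [nproj, real_inner_smul_right]
    have hvpos : 0 < ‖v n‖ := norm_pos_iff.mpr (hvne n)
    rw [hinner n]
    positivity
  linarith [hxP _ hKn]

end helper

section sep
variable {d : ℕ}

lemma sep_lemma {K : Set (Euc (d+1))} (hK : IsSphBody d K)
    {z : Euc (d+1)} (hz : ‖z‖ = 1) (hzn : z ∉ sphInt d K) :
    ∃ x : Euc (d+1), ‖x‖ = 1 ∧ (∀ y ∈ K, ⟪x, y⟫ ≤ 0) ∧ 0 ≤ ⟪x, z⟫ := by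
  obtain ⟨hcomp, hconv, hint⟩ := hK
  have hKsph : K ⊆ uSphere d := hconv.1
  set C : Set (Euc (d+1)) := {v | ∃ r : ℝ, 0 ≤ r ∧ ∃ y ∈ K, v = r • y} with hC
  obtain ⟨m₀, hm₀⟩ := hint
  have hm₀K : m₀ ∈ K := sphInt_subset hm₀
  have h0C : (0 : Euc (d+1)) ∈ C := ⟨0, le_refl 0, m₀, hm₀K, (zero_smul ℝ m₀).symm⟩
  -- C is convex
  have hCconv : Convex ℝ C := by
    rintro v₁ ⟨r₁, hr₁, y₁, hy₁, rfl⟩ v₂ ⟨r₂, hr₂, y₂, hy₂, rfl⟩ a b ha hb hab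
    have heq : a • r₁ • y₁ + b • r₂ • y₂ = (a*r₁) • y₁ + (b*r₂) • y₂ := by
      rw [smul_smul, smul_smul]
    rw [heq]
    by_cases hz0 : (a*r₁) • y₁ + (b*r₂) • y₂ = 0
    · rw [hz0]; exact h0C
    · have hmem := cone_mem_K hconv hy₁ hy₂ (mul_nonneg ha hr₁) (mul_nonneg hb hr₂) hz0
      refine ⟨‖(a*r₁) • y₁ + (b*r₂) • y₂‖, norm_nonneg _, _, hmem, ?_⟩
      rw [nproj, smul_smul, mul_inv_cancel₀ (norm_ne_zero_iff.mpr hz0), one_smul]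
  -- m₀ is in the interior of C
  have hm₀int : m₀ ∈ interior C := by
    obtain ⟨hm₀S, U, hU, hm₀U, hUK⟩ := hm₀
    have hm₀1 : ‖m₀‖ = 1 := mem_uSphere_iff.mp hm₀S
    set V : Set (Euc (d+1)) := {v | v ≠ 0} ∩ (nproj ⁻¹' U) with hV
    have hVopen : IsOpen V := by
      have hs : IsOpen {v : Euc (d+1) | v ≠ 0} := isOpen_compl_singleton
      have hcont : ContinuousOn (nproj : Euc (d+1) → Euc (d+1)) {v | v ≠ 0} := by
        intro v hv
        exact ((continuousAt_id.norm.inv₀ (norm_ne_zero_iff.mpr hv)).smul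
          continuousAt_id).continuousWithinAt
      exact hcont.isOpen_inter_preimage hs hU
    have hVC : V ⊆ C := by
      rintro v ⟨hv0, hvU⟩
      have : nproj v ∈ K := hUK ⟨hvU, mem_uSphere_iff.mpr (norm_nproj hv0)⟩
      refine ⟨‖v‖, norm_nonneg v, nproj v, this, ?_⟩
      rw [nproj, smul_smul, mul_inv_cancel₀ (norm_ne_zero_iff.mpr hv0), one_smul]
    have hm₀V : m₀ ∈ V := by
      constructor
      · simp only [mem_setOf_eq]
        intro h; rw [h] at hm₀1; simp at hm₀1
      · simp only [mem_preimage, nproj_unit hm₀1]; exact hm₀U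
    exact mem_interior.mpr ⟨V, hVC, hVopen, hm₀V⟩
  -- z is not in the interior of C
  have hzint : z ∉ interior C := by
    intro h
    apply hzn
    refine ⟨mem_uSphere_iff.mpr hz, interior C, isOpen_interior, h, ?_⟩
    rintro y ⟨hyI, hyS⟩
    obtain ⟨r, hr, y', hy', rfl⟩ := interior_subset hyI
    have hy'1 : ‖y'‖ = 1 := mem_uSphere_iff.mp (hKsph hy')
    have hr1 : r = 1 := by
      have := mem_uSphere_iff.mp hyS
      rw [norm_smul, Real.norm_eq_abs, hy'1, mul_one, abs_of_nonneg hr] at this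
      exact this
    rw [hr1, one_smul]; exact hy'
  -- separate
  obtain ⟨f, w, hfu, huf⟩ := geometric_hahn_banach_open hCconv.interior isOpen_interior
    (convex_singleton z) (Set.disjoint_singleton_right.mpr hzint)
  have hfz : w ≤ f z := huf z rfl
  have hfC : ∀ v ∈ C, f v ≤ w := by
    intro v hv
    by_contra hc
    push_neg at hc
    have hm₀lt : f m₀ < w := hfu m₀ hm₀int
    set δ : ℝ := f v - f m₀ with hδ
    have hδpos : 0 < δ := by rw [hδ]; linarith
    set s : ℝ := min 1 ((f v - w)/(2*δ)) with hs
    have hs0 : 0 < s := by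
      apply lt_min one_pos
      apply div_pos (by linarith) (by linarith)
    have hs1 : s ≤ 1 := min_le_left _ _
    have hcombo : (1 - s) • v + s • m₀ ∈ interior C :=
      hCconv.combo_self_interior_mem_interior hv hm₀int (by linarith) hs0 (by ring)
    have hflt := hfu _ hcombo
    rw [map_add, map_smul, map_smul, smul_eq_mul, smul_eq_mul] at hflt
    have hsδ : s * δ ≤ (f v - w)/2 := by
      have : s ≤ (f v - w)/(2*δ) := min_le_right _ _
      calc s * δ ≤ ((f v - w)/(2*δ)) * δ := by nlinarith
        _ = (f v - w)/2 := by field_simp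
    nlinarith
  have hu0 : 0 ≤ w := by
    have := hfC 0 h0C
    rwa [map_zero] at this
  have hKneg : ∀ y ∈ K, f y ≤ 0 := by
    intro y hy
    by_contra h
    push_neg at h
    have hmem : ((w+1)/f y) • y ∈ C := ⟨(w+1)/f y, div_nonneg (by linarith) h.le, y, hy, rfl⟩
    have := hfC _ hmem
    rw [map_smul, smul_eq_mul, div_mul_cancel₀ _ (ne_of_gt h)] at this
    linarith
  -- Riesz representation
  set wv : Euc (d+1) := (InnerProductSpace.toDual ℝ (Euc (d+1))).symm f with hwv
  have hwf : ∀ y : Euc (d+1), ⟪wv, y⟫ = f y := fun y => InnerProductSpace.toDual_symm_apply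
  have hwne : wv ≠ 0 := by
    intro h
    have h1 : f m₀ < w := hfu m₀ hm₀int
    have h2 : f m₀ = 0 := by rw [← hwf, h, inner_zero_left]
    have h3 : f z = 0 := by rw [← hwf, h, inner_zero_left]
    rw [h2] at h1; rw [h3] at hfz; linarith
  refine ⟨‖wv‖⁻¹ • wv, ?_, ?_, ?_⟩
  · rw [norm_smul, Real.norm_eq_abs, abs_of_nonneg (inv_nonneg.mpr (norm_nonneg _)),
      inv_mul_cancel₀ (norm_ne_zero_iff.mpr hwne)]
  · intro y hy
    rw [real_inner_smul_left, hwf]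
    exact mul_nonpos_of_nonneg_of_nonpos (inv_nonneg.mpr (norm_nonneg _)) (hKneg y hy)
  · rw [real_inner_smul_left, hwf]
    exact mul_nonneg (inv_nonneg.mpr (norm_nonneg _)) (by linarith)

end sep

section minface
variable {d : ℕ}

lemma min_face_subset {K F : Set (Euc (d+1))} {q : Euc (d+1)}
    (hF : IsSphExposedFace d K F) (hqF : q ∈ F) (hq0 : q ≠ 0)
    (hmin : ∀ F', IsSphExposedFace d K F' → q ∈ F' → sphFaceDim d F ≤ sphFaceDim d F')
    {G : Set (Euc (d+1))} (hG : IsSphExposedFace d K G) (hqG : q ∈ G) : F ⊆ G := by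
  obtain ⟨hFne, uF, huFS, huFsup, hFeq⟩ := hF
  obtain ⟨hGne, uG, huGS, huGsup, hGeq⟩ := hG
  have hFK : F ⊆ K := by rw [hFeq]; exact sep_subset _ _
  by_cases hcase : uF + uG = 0
  · -- G = K in this case
    intro y hy
    have hyK : y ∈ K := hFK hy
    rw [hGeq]
    refine ⟨hyK, le_antisymm (huGsup y hyK) ?_⟩
    have h1 := huFsup y hyK
    have h2 : uF = -uG := by linear_combination (norm := module) hcase
    rw [h2, inner_neg_left] at h1
    linarith
  · set w := nproj (uF + uG) with hw
    have hnpos : 0 < ‖uF + uG‖ := norm_pos_iff.mpr hcase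
    have hw1 : ‖w‖ = 1 := norm_nproj hcase
    have hinner_w : ∀ y : Euc (d+1), ⟪w, y⟫ = ‖uF + uG‖⁻¹ * (⟪uF, y⟫ + ⟪uG, y⟫) := by
      intro y
      rw [hw, nproj, real_inner_smul_left, inner_add_left]
    have hwsup : ∀ y ∈ K, ⟪w, y⟫ ≤ 0 := by
      intro y hy
      rw [hinner_w]
      exact mul_nonpos_of_nonneg_of_nonpos (inv_nonneg.mpr (norm_nonneg _))
        (add_nonpos (huFsup y hy) (huGsup y hy))
    set E : Set (Euc (d+1)) := {y ∈ K | ⟪w, y⟫ = 0} with hE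
    have hEFG : E = F ∩ G := by
      ext y
      simp only [hE, mem_setOf_eq, mem_inter_iff, hFeq, hGeq]
      constructor
      · rintro ⟨hyK, hy0⟩
        rw [hinner_w] at hy0
        have h1 := huFsup y hyK
        have h2 := huGsup y hyK
        have h3 : ⟪uF, y⟫ + ⟪uG, y⟫ = 0 := by
          rcases mul_eq_zero.mp hy0 with h | h
          · exact absurd h (by positivity)
          · exact h
        exact ⟨⟨hyK, by linarith⟩, ⟨hyK, by linarith⟩⟩
      · rintro ⟨⟨hyK, h1⟩, ⟨_, h2⟩⟩
        refine ⟨hyK, ?_⟩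
        rw [hinner_w, h1, h2]
        ring
    have hqE : q ∈ E := by rw [hEFG]; exact ⟨hqF, hqG⟩
    have hexp : IsSphExposedFace d K E :=
      ⟨⟨q, hqE⟩, w, mem_uSphere_iff.mpr hw1, hwsup, rfl⟩
    have hdim := hmin E hexp hqE
    have hEF : E ⊆ F := by rw [hEFG]; exact inter_subset_left
    have hspan : Submodule.span ℝ E ≤ Submodule.span ℝ F := Submodule.span_mono hEF
    have hfr : Module.finrank ℝ (Submodule.span ℝ E) ≤ Module.finrank ℝ (Submodule.span ℝ F) :=
      Submodule.finrank_mono hspan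
    have h1le : 1 ≤ Module.finrank ℝ (Submodule.span ℝ E) := by
      have hqspan : q ∈ Submodule.span ℝ E := Submodule.subset_span hqE
      have : Nontrivial (Submodule.span ℝ E) := by
        refine nontrivial_of_ne ⟨q, hqspan⟩ 0 ?_
        simp [Submodule.mk_eq_zero, hq0]
      exact Module.finrank_pos_iff.mpr this
    have hfr2 : Module.finrank ℝ (Submodule.span ℝ F) ≤ Module.finrank ℝ (Submodule.span ℝ E) := by
      unfold sphFaceDim at hdim
      omega
    have hspaneq : Submodule.span ℝ E = Submodule.span ℝ F :=
      Submodule.eq_of_le_of_finrank_le hspan hfr2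
    intro y hyF
    have hyspan : y ∈ Submodule.span ℝ E := by
      rw [hspaneq]; exact Submodule.subset_span hyF
    have hker : Submodule.span ℝ E ≤ LinearMap.ker (innerSL ℝ uG).toLinearMap := by
      rw [Submodule.span_le]
      intro v hv
      rw [SetLike.mem_coe, LinearMap.mem_ker]
      have : v ∈ G := (hEFG ▸ hv).2
      rw [hGeq] at this
      simpa using this.2
    have : ⟪uG, y⟫ = 0 := by
      have := hker hyspan
      rwa [LinearMap.mem_ker, ContinuousLinearMap.coe_coe, innerSL_apply_apply] at this
    rw [hGeq]
    exact ⟨hFK hyF, this⟩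

end minface

/-- For a great sphere `H` disjoint from the convex body `K ⊆ S^d`, a point `p ∈ H` and
a boundary point `q` of `K` with `p ≠ -q`, and `F` the smallest-dimensional exposed face
of `K` containing `q`: `q` is illuminated from `p` iff `F̂ ⊆ H_p`. -/
theorem stmt16 (d : ℕ) (K : Set (Euc (d + 1))) (hK : IsSphBody d K)
    (u : Euc (d + 1)) (hu : u ∈ uSphere d) (hdisj : greatSphere d u ∩ K = ∅)
    (p : Euc (d + 1)) (hp : p ∈ greatSphere d u)
    (q : Euc (d + 1)) (hq : q ∈ sphBd d K) (hpq : p ≠ -q)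
    (F : Set (Euc (d + 1))) (hF : IsSphExposedFace d K F) (hqF : q ∈ F)
    (hmin : ∀ F', IsSphExposedFace d K F' → q ∈ F' → sphFaceDim d F ≤ sphFaceDim d F') :
    SphIlluminated d K p q ↔ conjFace d K F ⊆ openHemi d p := by
  obtain ⟨hcomp, hconv, hint⟩ := hK
  have hKsph : K ⊆ uSphere d := hconv.1
  obtain ⟨hFne, uF, huFS, huFsup, hFeq⟩ := hF
  have hFK : F ⊆ K := by rw [hFeq]; exact sep_subset _ _
  have hqK : q ∈ K := hFK hqF
  have hqnint : q ∉ sphInt d K := hq.2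
  have hq1 : ‖q‖ = 1 := mem_uSphere_iff.mp (hKsph hqK)
  have hq0 : q ≠ 0 := by intro h; rw [h] at hq1; simp at hq1
  have hp1 : ‖p‖ = 1 := mem_uSphere_iff.mp hp.1
  have hpK : p ∉ K := by
    intro h
    exact absurd hdisj (by rw [eq_empty_iff_forall_notMem]; push_neg; exact ⟨p, hp, h⟩)
  have hnegq : -q ∉ K := neg_not_mem hconv hqK
  have huFq : ⟪uF, q⟫ = 0 := by
    have := hFeq ▸ hqF
    exact this.2
  constructor
  · -- forward direction
    rintro ⟨h1, h2, h3⟩ x hx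
    obtain ⟨⟨hxS, hxP⟩, hxF⟩ := hx
    have hx1 : ‖x‖ = 1 := mem_uSphere_iff.mp hxS
    refine ⟨hxS, ?_⟩
    obtain ⟨m, ⟨hmS, hmspan⟩, hmint⟩ := h3
    have hm1 : ‖m‖ = 1 := mem_uSphere_iff.mp hmS
    obtain ⟨α, β, hm⟩ := Submodule.mem_span_pair.mp hmspan
    have hxm : ⟪x, m⟫ < 0 := polar_inner_int_neg hx1 hxP hmint
    have hxq : ⟪x, q⟫ = 0 := hxF q hqF
    have hxm' : ⟪x, m⟫ = α * ⟪x, p⟫ := by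
      rw [← hm, inner_add_right, real_inner_smul_right, real_inner_smul_right, hxq]
      ring
    have hα : α < 0 := by
      rcases lt_trichotomy α 0 with h | h | h
      · exact h
      · rw [h, zero_mul] at hxm'; linarith
      · exfalso
        rcases le_or_gt 0 β with hβ | hβ
        · -- m is on the segment from p to q
          have hαβ : 0 < α + β := by linarith
          have hseg : m ∈ sphSeg p q := by
            refine ⟨β/(α+β), ⟨div_nonneg hβ hαβ.le, div_le_one_of_le₀ (by linarith) hαβ.le⟩, ?_⟩
            show nproj ((1 - β/(α+β)) • p + (β/(α+β)) • q) = m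
            have heq1 : (1 - β/(α+β)) • p + (β/(α+β)) • q = (α+β)⁻¹ • m := by
              rw [← hm, smul_add, smul_smul, smul_smul]
              congr 2
              · field_simp; ring
              · field_simp
            rw [heq1, nproj_smul _ (inv_pos.mpr hαβ), nproj_unit hm1]
          exact absurd h2 (by
            rw [eq_empty_iff_forall_notMem]; push_neg
            exact ⟨m, hseg, hmint⟩)
        · -- p is on the arc between m and q, hence in K
          have hmK : m ∈ K := sphInt_subset hmint
          have hveq : α⁻¹ • m + (-β/α) • q = p := by
            rw [← hm]
            rw [smul_add, smul_smul, smul_smul, inv_mul_cancel₀ (ne_of_gt h), one_smul,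
              add_assoc, ← add_smul]
            have : α⁻¹ * β + -β/α = 0 := by field_simp; ring
            rw [this, zero_smul, add_zero]
          have hvne : α⁻¹ • m + (-β/α) • q ≠ 0 := by
            rw [hveq]
            intro hcon; rw [hcon] at hp1; simp at hp1
          have := cone_mem_K hconv hmK hqK (inv_nonneg.mpr h.le)
            (div_nonneg (by linarith) h.le) hvne
          rw [hveq, nproj_unit hp1] at this
          exact hpK this
    have hfinal : 0 < ⟪x, p⟫ := by
      by_contra hc
      push_neg at hc
      nlinarith
    rwa [real_inner_comm]
  · -- backward direction
    intro hsub
    have huFconj : uF ∈ conjFace d K F := by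
      refine ⟨⟨huFS, huFsup⟩, ?_⟩
      intro y hy
      exact (hFeq ▸ hy).2
    have hpuF : 0 < ⟪p, uF⟫ := (hsub huFconj).2
    refine ⟨?_, ?_, ?_⟩
    · intro h; exact hpq (by rw [h, neg_neg])
    · -- segment condition
      rw [eq_empty_iff_forall_notMem]
      rintro m ⟨⟨t, ⟨ht0, ht1⟩, rfl⟩, hmint⟩
      set v : Euc (d+1) := (1-t) • p + t • q with hv
      have hm1 : ‖nproj v‖ = 1 := mem_uSphere_iff.mp hmint.1
      have hv0 : v ≠ 0 := by
        intro h
        rw [h] at hm1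
        simp [nproj] at hm1
      rcases ht1.lt_or_eq with h | h
      · have hpos : 0 < ⟪uF, v⟫ := by
          rw [hv, inner_add_right, real_inner_smul_right, real_inner_smul_right, huFq,
            mul_zero, add_zero, real_inner_comm]
          have : 0 < 1 - t := by linarith
          positivity
        have hle : ⟪uF, nproj v⟫ ≤ 0 := huFsup _ (sphInt_subset hmint)
        rw [nproj, real_inner_smul_right] at hle
        have hvpos : 0 < ‖v‖ := norm_pos_iff.mpr hv0
        nlinarith [inv_pos.mpr hvpos]
      · apply hqnint
        have heqq : (fun t : ℝ => nproj ((1 - t) • p + t • q)) t = q := by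
          rw [h]
          simp [nproj_unit hq1]
        rwa [heqq] at hmint
    · -- the great circle meets the interior
      by_contra hemp
      rw [not_nonempty_iff_eq_empty] at hemp
      set z : ℕ → Euc (d+1) := fun n => q - (((n:ℝ)+2)⁻¹) • p with hz
      have hzne : ∀ n, z n ≠ 0 := by
        intro n h
        have h1 : (0:ℝ) < ((n:ℝ)+2)⁻¹ := by positivity
        have h2 : ((n:ℝ)+2)⁻¹ < 1 := by
          rw [inv_lt_one_iff₀]
          right
          have := Nat.cast_nonneg (α := ℝ) n
          linarith
        have : ‖z n‖ ≥ ‖q‖ - ‖(((n:ℝ)+2)⁻¹) • p‖ := norm_sub_norm_le _ _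
        rw [h, norm_zero, norm_smul, Real.norm_eq_abs, abs_of_pos h1, hp1, mul_one, hq1] at this
        linarith
      have hzspan : ∀ n, z n ∈ Submodule.span ℝ {p, q} := by
        intro n
        apply Submodule.sub_mem
        · exact Submodule.subset_span (by simp)
        · exact Submodule.smul_mem _ _ (Submodule.subset_span (by simp))
      have hznint : ∀ n, nproj (z n) ∉ sphInt d K := by
        intro n hcon
        have hgc : nproj (z n) ∈ greatCircle d p q := by
          refine ⟨mem_uSphere_iff.mpr (norm_nproj (hzne n)), ?_⟩
          exact Submodule.smul_mem _ _ (hzspan n)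
        exact absurd hemp (by
          rw [eq_empty_iff_forall_notMem]; push_neg
          exact ⟨nproj (z n), hgc, hcon⟩)
      choose x hx1 hx2 hx3 using fun n =>
        sep_lemma ⟨hcomp, hconv, hint⟩ (norm_nproj (hzne n)) (hznint n)
      have hxz : ∀ n, 0 ≤ ⟪x n, z n⟫ := by
        intro n
        have h3 := hx3 n
        rw [nproj, real_inner_smul_right] at h3
        have hvpos : 0 < ‖z n‖ := norm_pos_iff.mpr (hzne n)
        nlinarith [inv_pos.mpr hvpos]
      have hxq' : ∀ n, ⟪x n, q⟫ ≤ 0 := fun n => hx2 n q hqK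
      have hxp : ∀ n, ⟪x n, p⟫ ≤ 0 := by
        intro n
        have h1 := hxz n
        rw [hz] at h1
        simp only [inner_sub_right, real_inner_smul_right] at h1
        have h2 : (0:ℝ) < ((n:ℝ)+2)⁻¹ := by positivity
        nlinarith [hxq' n]
      -- compactness
      have hxS : ∀ n, x n ∈ Metric.sphere (0 : Euc (d+1)) 1 := by
        intro n; rw [mem_sphere_zero_iff_norm]; exact hx1 n
      obtain ⟨x₀, hx₀S, φ, hφ, hconv'⟩ :=
        (isCompact_sphere (0 : Euc (d+1)) 1).tendsto_subseq hxS
      have hx₀1 : ‖x₀‖ = 1 := mem_sphere_zero_iff_norm.mp hx₀S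
      have hx₀K : ∀ y ∈ K, ⟪x₀, y⟫ ≤ 0 := by
        intro y hy
        have htd : Tendsto (fun n => ⟪x (φ n), y⟫) atTop (𝓝 ⟪x₀, y⟫) :=
          hconv'.inner tendsto_const_nhds
        exact le_of_tendsto htd (Eventually.of_forall fun n => hx2 (φ n) y hy)
      have hx₀p : ⟪x₀, p⟫ ≤ 0 := by
        have htd : Tendsto (fun n => ⟪x (φ n), p⟫) atTop (𝓝 ⟪x₀, p⟫) :=
          hconv'.inner tendsto_const_nhds
        exact le_of_tendsto htd (Eventually.of_forall fun n => hxp (φ n))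
      have hx₀q : 0 ≤ ⟪x₀, q⟫ := by
        have hztend : Tendsto z atTop (𝓝 q) := by
          have h1 : Tendsto (fun n : ℕ => (((n:ℝ)+2)⁻¹) • p) atTop (𝓝 ((0:ℝ) • p)) := by
            apply Tendsto.smul_const
            have : Tendsto (fun n : ℕ => (n:ℝ)+2) atTop atTop :=
              tendsto_atTop_add_const_right _ 2 tendsto_natCast_atTop_atTop
            exact tendsto_inv_atTop_zero.comp this
          rw [zero_smul] at h1
          have h2 := (tendsto_const_nhds : Tendsto (fun _ : ℕ => q) atTop (𝓝 q)).sub h1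
          rw [sub_zero] at h2
          exact h2
        have htd : Tendsto (fun n => ⟪x (φ n), z (φ n)⟫) atTop (𝓝 ⟪x₀, q⟫) :=
          hconv'.inner (hztend.comp hφ.tendsto_atTop)
        exact ge_of_tendsto htd (Eventually.of_forall fun n => hxz (φ n))
      have hx₀q0 : ⟪x₀, q⟫ = 0 := le_antisymm (hx₀K q hqK) hx₀q
      -- x₀ gives an exposed face containing q
      set G : Set (Euc (d+1)) := {y ∈ K | ⟪x₀, y⟫ = 0} with hG
      have hGexp : IsSphExposedFace d K G :=
        ⟨⟨q, hqK, hx₀q0⟩, x₀, mem_uSphere_iff.mpr hx₀1, hx₀K, rfl⟩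
      have hqG : q ∈ G := ⟨hqK, hx₀q0⟩
      have hFG : F ⊆ G := min_face_subset ⟨hFne, uF, huFS, huFsup, hFeq⟩ hqF hq0 hmin hGexp hqG
      have hx₀conj : x₀ ∈ conjFace d K F := by
        refine ⟨⟨mem_uSphere_iff.mpr hx₀1, hx₀K⟩, ?_⟩
        intro y hy
        exact (hFG hy).2
      have := (hsub hx₀conj).2
      rw [real_inner_comm] at this
      linarith
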